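/- Let m ≥ 1 and let 𝒩ₘ := {N ∈ ℝ^{m×m} : N symmetric and v(y)ᵀ N v(y) = 0 for all y ∈ ℝ}, where v(y) = (1, y, …, y^{m-1})ᵀ. Then 𝒩ₘ has dimension (m−1)(m−2)/2, and a basis is given by the matrices N_{(i,j)} := e_i e_jᵀ + e_j e_iᵀ − e_{⌊(i+j)/2⌋} e_{⌈(i+j)/2⌉}ᵀ − e_{⌈(i+j)/2⌉} e_{⌊(i+j)/2⌋}ᵀ, indexed over pairs (i,j) with 1 ≤ i ≤ m−2 and i+2 ≤ j ≤ m, where e_k denotes the k-th standard unit vector of ℝ^m. -/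

import Mathlib

open Matrix

/-- The `k`-th standard unit vector of `ℝ^m`, indexed `1, …, m`. -/
def stdVec (m k : ℕ) : Fin m → ℝ := fun i => if (i : ℕ) + 1 = k then 1 else 0

/-- The basis matrix `N_{(i,j)} = e_i e_jᵀ + e_j e_iᵀ − e_{⌊(i+j)/2⌋} e_{⌈(i+j)/2⌉}ᵀ
− e_{⌈(i+j)/2⌉} e_{⌊(i+j)/2⌋}ᵀ` (1-based indices). -/
def momentNullMat (m i j : ℕ) : Matrix (Fin m) (Fin m) ℝ :=
  vecMulVec (stdVec m i) (stdVec m j) + vecMulVec (stdVec m j) (stdVec m i)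
    - vecMulVec (stdVec m ((i + j) / 2)) (stdVec m ((i + j + 1) / 2))
    - vecMulVec (stdVec m ((i + j + 1) / 2)) (stdVec m ((i + j) / 2))

/-- The index set `1 ≤ i ≤ m − 2`, `i + 2 ≤ j ≤ m`. -/
def momentNullIdx (m : ℕ) : Type :=
  {ij : ℕ × ℕ // 1 ≤ ij.1 ∧ ij.1 ≤ m - 2 ∧ ij.1 + 2 ≤ ij.2 ∧ ij.2 ≤ m}

section Aux

lemma mnm_apply (m i j : ℕ) (a b : Fin m) :
    momentNullMat m i j a b =
      (if (a:ℕ)+1 = i ∧ (b:ℕ)+1 = j then (1:ℝ) else 0)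
      + (if (a:ℕ)+1 = j ∧ (b:ℕ)+1 = i then 1 else 0)
      - (if (a:ℕ)+1 = (i+j)/2 ∧ (b:ℕ)+1 = (i+j+1)/2 then 1 else 0)
      - (if (a:ℕ)+1 = (i+j+1)/2 ∧ (b:ℕ)+1 = (i+j)/2 then 1 else 0) := by
  simp only [momentNullMat, Matrix.sub_apply, Matrix.add_apply, vecMulVec_apply, stdVec, ite_and]
  split_ifs <;> ring

lemma mnm_symm (m i j : ℕ) : (momentNullMat m i j).IsSymm := by
  apply Matrix.IsSymm.ext
  intro a b
  rw [mnm_apply, mnm_apply]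
  have h : ∀ (p q : Prop) [Decidable p] [Decidable q],
      (if p ∧ q then (1:ℝ) else 0) = (if q ∧ p then 1 else 0) := by
    intro p q _ _; simp [and_comm]
  rw [h ((a:ℕ)+1 = i), h ((a:ℕ)+1 = j), h ((a:ℕ)+1 = (i+j)/2), h ((a:ℕ)+1 = (i+j+1)/2)]
  ring

lemma mnm_apply_sep (m i j : ℕ) (hij : i + 2 ≤ j) (a b : Fin m)
    (hab : (a:ℕ) + 2 ≤ (b:ℕ)) :
    momentNullMat m i j a b = if (a:ℕ)+1 = i ∧ (b:ℕ)+1 = j then 1 else 0 := by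
  have h2 : ¬((a:ℕ)+1 = j ∧ (b:ℕ)+1 = i) := by omega
  have h3 : ¬((a:ℕ)+1 = (i+j)/2 ∧ (b:ℕ)+1 = (i+j+1)/2) := by omega
  have h4 : ¬((a:ℕ)+1 = (i+j+1)/2 ∧ (b:ℕ)+1 = (i+j)/2) := by omega
  rw [mnm_apply, if_neg h2, if_neg h3, if_neg h4]
  ring

lemma dot_std (m k : ℕ) (h1 : 1 ≤ k) (h2 : k ≤ m) (y : ℝ) :
    (fun i : Fin m => y ^ (i:ℕ)) ⬝ᵥ stdVec m k = y ^ (k-1) := by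
  unfold dotProduct stdVec
  rw [Finset.sum_eq_single (⟨k-1, by omega⟩ : Fin m)]
  · have h : k - 1 + 1 = k := by omega
    simp [h]
  · intro i _ hne
    have : (i:ℕ) + 1 ≠ k := by
      intro h; apply hne; exact Fin.ext (by simp; omega)
    simp [this]
  · simp

lemma std_dot (m k : ℕ) (h1 : 1 ≤ k) (h2 : k ≤ m) (y : ℝ) :
    stdVec m k ⬝ᵥ (fun i : Fin m => y ^ (i:ℕ)) = y ^ (k-1) := by
  rw [dotProduct_comm]; exact dot_std m k h1 h2 y

lemma form_vecMulVec {m : ℕ} (u w x : Fin m → ℝ) :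
    x ⬝ᵥ (vecMulVec u w).mulVec x = (x ⬝ᵥ u) * (w ⬝ᵥ x) := by
  simp only [dotProduct, mulVec, vecMulVec_apply, Finset.sum_mul, Finset.mul_sum]
  rw [Finset.sum_comm]
  exact Finset.sum_congr rfl fun a _ => Finset.sum_congr rfl fun b _ => by ring

lemma form_coeff {m : ℕ} (N : Matrix (Fin m) (Fin m) ℝ)
    (h : ∀ y : ℝ, (fun i : Fin m => y ^ (i:ℕ)) ⬝ᵥ N.mulVec (fun i : Fin m => y ^ (i:ℕ)) = 0)
    (r : ℕ) :
    ∑ a : Fin m, ∑ b : Fin m, (if (a:ℕ)+(b:ℕ) = r then N a b else 0) = 0 := by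
  set P : Polynomial ℝ :=
    ∑ a : Fin m, ∑ b : Fin m, Polynomial.C (N a b) * Polynomial.X ^ ((a:ℕ)+(b:ℕ)) with hPdef
  have hP : P = 0 := by
    apply Polynomial.funext
    intro y
    have hy := h y
    rw [hPdef]
    simp only [Polynomial.eval_finset_sum, Polynomial.eval_mul, Polynomial.eval_C,
      Polynomial.eval_pow, Polynomial.eval_X, Polynomial.eval_zero]
    rw [← hy]
    simp only [dotProduct, mulVec, Finset.mul_sum]
    exact Finset.sum_congr rfl fun a _ => Finset.sum_congr rfl fun b _ => by
      rw [pow_add]; ring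
  have hc := congrArg (fun p => Polynomial.coeff p r) hP
  simp only [hPdef, Polynomial.finset_sum_coeff, Polynomial.coeff_C_mul,
    Polynomial.coeff_X_pow, Polynomial.coeff_zero, mul_ite, mul_one, mul_zero] at hc
  refine Eq.trans ?_ hc
  exact Finset.sum_congr rfl fun a _ => Finset.sum_congr rfl fun b _ => if_congr eq_comm rfl rfl

lemma banded_zero {m : ℕ} (D : Matrix (Fin m) (Fin m) ℝ) (hsym : D.IsSymm)
    (hband : ∀ a b : Fin m, (a:ℕ) + 2 ≤ (b:ℕ) → D a b = 0)
    (hc : ∀ r : ℕ, ∑ a : Fin m, ∑ b : Fin m, (if (a:ℕ)+(b:ℕ) = r then D a b else 0) = 0) :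
    D = 0 := by
  have hband' : ∀ a b : Fin m, (b:ℕ) + 2 ≤ (a:ℕ) → D a b = 0 := fun a b h => by
    rw [← hsym.apply a b]; exact hband b a h
  have hprod : ∀ r : ℕ,
      ∑ p : Fin m × Fin m, (if (p.1:ℕ)+(p.2:ℕ) = r then D p.1 p.2 else 0) = 0 := by
    intro r
    rw [Fintype.sum_prod_type]
    exact hc r
  have hadj : ∀ a b : Fin m, (b:ℕ) = (a:ℕ) + 1 → D a b = 0 := by
    intro a b hba
    have hab : a ≠ b := by intro h'; rw [h'] at hba; omega
    have habp : ((a,b) : Fin m × Fin m) ≠ (b,a) := by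
      intro h'; exact hab (congrArg Prod.fst h')
    have key := hprod ((a:ℕ)+(b:ℕ))
    rw [← Finset.sum_subset (Finset.subset_univ ({(a,b),(b,a)} : Finset (Fin m × Fin m)))] at key
    · rw [Finset.sum_pair habp] at key
      simp only [if_pos rfl] at key
      rw [show ((b:ℕ)+(a:ℕ)) = ((a:ℕ)+(b:ℕ)) from by omega] at key
      rw [if_pos rfl, hsym.apply a b] at key
      simp only [if_true] at key
      linarith
    · intro p _ hp
      simp only [Finset.mem_insert, Finset.mem_singleton] at hp
      push_neg at hp
      by_cases hcond : (p.1:ℕ)+(p.2:ℕ) = (a:ℕ)+(b:ℕ)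
      · rw [if_pos hcond]
        have h1 : ¬((p.1:ℕ) = a ∧ (p.2:ℕ) = b) := by
          intro ⟨u,v⟩; exact hp.1 (Prod.ext (Fin.ext u) (Fin.ext v))
        have h2 : ¬((p.1:ℕ) = b ∧ (p.2:ℕ) = a) := by
          intro ⟨u,v⟩; exact hp.2 (Prod.ext (Fin.ext u) (Fin.ext v))
        rcases (show (p.1:ℕ)+2 ≤ (p.2:ℕ) ∨ (p.2:ℕ)+2 ≤ (p.1:ℕ) by omega) with h' | h'
        · exact hband _ _ h'
        · exact hband' _ _ h'
      · rw [if_neg hcond]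
  ext a b
  simp only [Matrix.zero_apply]
  rcases (show ((a:ℕ)+2 ≤ (b:ℕ) ∨ (b:ℕ)+2 ≤ (a:ℕ) ∨ (b:ℕ) = (a:ℕ)+1 ∨ (a:ℕ) = (b:ℕ)+1
      ∨ (a:ℕ) = (b:ℕ)) by omega) with h | h | h | h | h
  · exact hband a b h
  · exact hband' a b h
  · exact hadj a b h
  · rw [← hsym.apply a b]; exact hadj b a h
  · have hab : a = b := Fin.ext (by omega)
    subst hab
    have key := hprod ((a:ℕ)+(a:ℕ))
    rw [Finset.sum_eq_single_of_mem (a,a) (Finset.mem_univ _)] at key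
    · simpa using key
    · intro p _ hne
      by_cases hcond : (p.1:ℕ)+(p.2:ℕ) = (a:ℕ)+(a:ℕ)
      · rw [if_pos hcond]
        have h1 : ¬((p.1:ℕ) = a ∧ (p.2:ℕ) = a) := by
          intro ⟨u,v⟩; exact hne (Prod.ext (Fin.ext u) (Fin.ext v))
        rcases (show (p.1:ℕ)+2 ≤ (p.2:ℕ) ∨ (p.2:ℕ)+2 ≤ (p.1:ℕ) by omega) with h2 | h2
        · exact hband _ _ h2
        · exact hband' _ _ h2
      · rw [if_neg hcond]

/-- The submodule of symmetric matrices whose moment quadratic form vanishes. -/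
def nullSp (m : ℕ) : Submodule ℝ (Matrix (Fin m) (Fin m) ℝ) where
  carrier := {N | N.IsSymm ∧ ∀ y : ℝ,
    (fun i : Fin m => y ^ (i:ℕ)) ⬝ᵥ N.mulVec (fun i : Fin m => y ^ (i:ℕ)) = 0}
  add_mem' := by
    rintro A B ⟨hA1, hA2⟩ ⟨hB1, hB2⟩
    refine ⟨hA1.add hB1, fun y => ?_⟩
    rw [Matrix.add_mulVec, dotProduct_add, hA2 y, hB2 y, add_zero]
  zero_mem' := by
    refine ⟨Matrix.isSymm_zero, fun y => ?_⟩
    rw [Matrix.zero_mulVec, dotProduct_zero]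
  smul_mem' := by
    rintro c A ⟨hA1, hA2⟩
    refine ⟨hA1.smul c, fun y => ?_⟩
    rw [Matrix.smul_mulVec, dotProduct_smul, hA2 y, smul_zero]

lemma mnm_mem_nullSp (m i j : ℕ) (hi : 1 ≤ i) (him : i ≤ m - 2) (hij : i + 2 ≤ j)
    (hj : j ≤ m) : momentNullMat m i j ∈ nullSp m := by
  have hm3 : 3 ≤ m := by omega
  refine ⟨mnm_symm m i j, fun y => ?_⟩
  unfold momentNullMat
  rw [Matrix.sub_mulVec, Matrix.sub_mulVec, Matrix.add_mulVec, dotProduct_sub, dotProduct_sub,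
    dotProduct_add, form_vecMulVec, form_vecMulVec, form_vecMulVec, form_vecMulVec,
    dot_std m i hi (by omega), dot_std m j (by omega) hj,
    dot_std m ((i+j)/2) (by omega) (by omega), dot_std m ((i+j+1)/2) (by omega) (by omega),
    std_dot m i hi (by omega), std_dot m j (by omega) hj,
    std_dot m ((i+j)/2) (by omega) (by omega), std_dot m ((i+j+1)/2) (by omega) (by omega)]
  rw [← pow_add, ← pow_add, ← pow_add, ← pow_add]
  rw [show (i-1) + (j-1) = (i+j)/2 - 1 + ((i+j+1)/2 - 1) from by omega,
    show (j-1) + (i-1) = (i+j)/2 - 1 + ((i+j+1)/2 - 1) from by omega,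
    show ((i+j+1)/2 - 1) + ((i+j)/2 - 1) = (i+j)/2 - 1 + ((i+j+1)/2 - 1) from by omega]
  ring

end Aux

theorem momentNull_basis (m : ℕ) (hm : 1 ≤ m) :
    LinearIndependent ℝ (fun ij : momentNullIdx m => momentNullMat m ij.1.1 ij.1.2) ∧
    (∀ N : Matrix (Fin m) (Fin m) ℝ,
      N ∈ Submodule.span ℝ
        (Set.range fun ij : momentNullIdx m => momentNullMat m ij.1.1 ij.1.2) ↔
      (N.IsSymm ∧ ∀ y : ℝ,
        (fun i : Fin m => y ^ (i : ℕ)) ⬝ᵥ N.mulVec (fun i : Fin m => y ^ (i : ℕ)) = 0)) ∧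
    Nat.card (momentNullIdx m) = (m - 1) * (m - 2) / 2 := by
  refine ⟨?_, ?_, ?_⟩
  · -- linear independence
    rw [linearIndependent_iff']
    intro s g hsum ij hij
    obtain ⟨⟨i, j⟩, hi1, hi2, hij2, hj⟩ := ij
    have hm3 : 3 ≤ m := by omega
    set a : Fin m := ⟨i - 1, by omega⟩ with ha
    set b : Fin m := ⟨j - 1, by omega⟩ with hb
    have hab : (a:ℕ) + 2 ≤ (b:ℕ) := by simp [ha, hb]; omega
    have h : ∑ k ∈ s, g k * momentNullMat m k.1.1 k.1.2 a b = 0 := by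
      have := congrArg (fun M : Matrix (Fin m) (Fin m) ℝ => M a b) hsum
      simpa [Matrix.sum_apply, Matrix.smul_apply] using this
    rw [Finset.sum_eq_single_of_mem ⟨(i,j), hi1, hi2, hij2, hj⟩ hij] at h
    · rw [mnm_apply_sep m i j hij2 a b hab, if_pos ⟨by simp [ha]; omega, by simp [hb]; omega⟩,
        mul_one] at h
      exact h
    · intro k _ hne
      rw [mnm_apply_sep m k.1.1 k.1.2 k.2.2.2.1 a b hab]
      rw [if_neg, mul_zero]
      intro ⟨h1, h2⟩
      apply hne
      apply Subtype.ext
      have e1 : k.1.1 = i := by simp [ha] at h1; omega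
      have e2 : k.1.2 = j := by simp [hb] at h2; omega
      exact Prod.ext e1 e2
  · -- span characterization
    intro N
    constructor
    · intro hN
      have hle : Submodule.span ℝ
          (Set.range fun ij : momentNullIdx m => momentNullMat m ij.1.1 ij.1.2) ≤ nullSp m := by
        rw [Submodule.span_le]
        rintro _ ⟨ij, rfl⟩
        exact mnm_mem_nullSp m ij.1.1 ij.1.2 ij.2.1 ij.2.2.1 ij.2.2.2.1 ij.2.2.2.2
      exact hle hN
    · rintro ⟨hNsym, hNform⟩
      set T : Finset (Fin m × Fin m) :=
        Finset.univ.filter (fun p => (p.1:ℕ) + 2 ≤ (p.2:ℕ)) with hT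
      set L : Matrix (Fin m) (Fin m) ℝ :=
        ∑ p ∈ T, N p.1 p.2 • momentNullMat m ((p.1:ℕ)+1) ((p.2:ℕ)+1) with hL
      have hLspan : L ∈ Submodule.span ℝ
          (Set.range fun ij : momentNullIdx m => momentNullMat m ij.1.1 ij.1.2) := by
        refine Submodule.sum_mem _ fun p hp => Submodule.smul_mem _ _ (Submodule.subset_span ?_)
        rw [hT, Finset.mem_filter] at hp
        have h2 : (p.2:ℕ) < m := p.2.isLt
        exact ⟨⟨((p.1:ℕ)+1, (p.2:ℕ)+1), by omega, by omega, by omega, by omega⟩, rfl⟩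
      have hentry : ∀ a b : Fin m, (a:ℕ) + 2 ≤ (b:ℕ) → L a b = N a b := by
        intro a b hab
        rw [hL]
        rw [Matrix.sum_apply]
        rw [Finset.sum_eq_single_of_mem (a, b)
          (by rw [hT, Finset.mem_filter]; exact ⟨Finset.mem_univ _, hab⟩)]
        · rw [Matrix.smul_apply, mnm_apply_sep m ((a:ℕ)+1) ((b:ℕ)+1) (by omega) a b hab,
            if_pos ⟨rfl, rfl⟩]
          simp
        · intro p hp hne
          rw [hT, Finset.mem_filter] at hp
          rw [Matrix.smul_apply, mnm_apply_sep m ((p.1:ℕ)+1) ((p.2:ℕ)+1) (by omega) a b hab,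
            if_neg, smul_zero]
          intro ⟨h1, h2⟩
          exact hne (Prod.ext (Fin.ext (show (p.1:ℕ) = (a:ℕ) by omega))
            (Fin.ext (show (p.2:ℕ) = (b:ℕ) by omega)))
      have hD : N - L ∈ nullSp m := by
        have hLmem : L ∈ nullSp m := by
          refine Submodule.sum_mem _ fun p hp => Submodule.smul_mem _ _ ?_
          rw [hT, Finset.mem_filter] at hp
          have h2 : (p.2:ℕ) < m := p.2.isLt
          exact mnm_mem_nullSp m ((p.1:ℕ)+1) ((p.2:ℕ)+1) (by omega) (by omega) (by omega)
            (by omega)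
        exact Submodule.sub_mem _ ⟨hNsym, hNform⟩ hLmem
      have hDzero : N - L = 0 := by
        apply banded_zero _ hD.1
        · intro a b hab
          rw [Matrix.sub_apply, hentry a b hab, sub_self]
        · exact fun r => form_coeff _ hD.2 r
      have : N = L := by
        rw [sub_eq_zero] at hDzero; exact hDzero
      rw [this]; exact hLspan
  · -- cardinality
    set s : Finset (ℕ × ℕ) := (Finset.range (m+1) ×ˢ Finset.range (m+1)).filter
      (fun ij => 1 ≤ ij.1 ∧ ij.1 ≤ m - 2 ∧ ij.1 + 2 ≤ ij.2 ∧ ij.2 ≤ m) with hs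
    have H : ∀ x : ℕ × ℕ,
        x ∈ s ↔ (1 ≤ x.1 ∧ x.1 ≤ m - 2 ∧ x.1 + 2 ≤ x.2 ∧ x.2 ≤ m) := by
      intro x
      rw [hs, Finset.mem_filter, Finset.mem_product, Finset.mem_range, Finset.mem_range]
      constructor
      · rintro ⟨_, h⟩; exact h
      · rintro ⟨h1, h2, h3, h4⟩; exact ⟨⟨by omega, by omega⟩, h1, h2, h3, h4⟩
    have e : momentNullIdx m ≃ {x : ℕ × ℕ // x ∈ s} :=
      Equiv.subtypeEquivRight (fun x => (H x).symm)
    rw [Nat.card_congr e, Nat.card_eq_finsetCard]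
    -- now compute s.card
    by_cases hm2 : m ≤ 2
    · have : s = ∅ := by
        rw [Finset.eq_empty_iff_forall_notMem]
        intro x hx
        rw [H] at hx
        omega
      rw [this, Finset.card_empty]
      have h0 : (m - 1) * (m - 2) = 0 := by
        rcases (show m = 1 ∨ m = 2 by omega) with h | h <;> subst h <;> rfl
      omega
    · push_neg at hm2
      rw [hs, Finset.card_filter, Finset.sum_product]
      have inner : ∀ i ∈ Finset.range (m+1),
          (∑ j ∈ Finset.range (m+1),
            if 1 ≤ i ∧ i ≤ m - 2 ∧ i + 2 ≤ j ∧ j ≤ m then 1 else 0)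
          = if 1 ≤ i ∧ i ≤ m - 2 then m - 1 - i else 0 := by
        intro i _
        by_cases hi : 1 ≤ i ∧ i ≤ m - 2
        · rw [if_pos hi]
          have : ∀ j, (if 1 ≤ i ∧ i ≤ m - 2 ∧ i + 2 ≤ j ∧ j ≤ m then 1 else 0)
              = if i + 2 ≤ j ∧ j ≤ m then (1:ℕ) else 0 := by
            intro j
            refine if_congr ?_ rfl rfl
            constructor
            · rintro ⟨_, _, h3, h4⟩; exact ⟨h3, h4⟩
            · rintro ⟨h3, h4⟩; exact ⟨hi.1, hi.2, h3, h4⟩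
          rw [Finset.sum_congr rfl (fun j _ => this j), ← Finset.card_filter]
          have : (Finset.range (m+1)).filter (fun j => i + 2 ≤ j ∧ j ≤ m)
              = Finset.Icc (i+2) m := by
            ext j
            rw [Finset.mem_filter, Finset.mem_range, Finset.mem_Icc]
            omega
          rw [this, Nat.card_Icc]
          omega
        · rw [if_neg hi]
          apply Finset.sum_eq_zero
          intro j _
          rw [if_neg]
          intro ⟨h1, h2, _, _⟩
          exact hi ⟨h1, h2⟩
      rw [Finset.sum_congr rfl inner]
      rw [← Finset.sum_filter]
      have hfi : (Finset.range (m+1)).filter (fun i => 1 ≤ i ∧ i ≤ m - 2)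
          = Finset.Icc 1 (m-2) := by
        ext i
        rw [Finset.mem_filter, Finset.mem_range, Finset.mem_Icc]
        omega
      rw [hfi]
      -- reflect i ↦ m - 1 - i
      have hrefl : ∑ i ∈ Finset.Icc 1 (m-2), (m - 1 - i) = ∑ i ∈ Finset.Icc 1 (m-2), i := by
        apply Finset.sum_nbij' (fun i => m - 1 - i) (fun i => m - 1 - i)
        · intro a ha; rw [Finset.mem_Icc] at *; omega
        · intro a ha; rw [Finset.mem_Icc] at *; omega
        · intro a ha; rw [Finset.mem_Icc] at ha; omega
        · intro a ha; rw [Finset.mem_Icc] at ha; omega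
        · intro a ha; rfl
      rw [hrefl]
      have hgauss := Finset.sum_range_id_mul_two (m-1)
      have hins : Finset.range (m-1) = insert 0 (Finset.Icc 1 (m-2)) := by
        ext i
        rw [Finset.mem_insert, Finset.mem_range, Finset.mem_Icc]
        omega
      rw [hins, Finset.sum_insert (by rw [Finset.mem_Icc]; omega)] at hgauss
      have hmm : m - 1 - 1 = m - 2 := by omega
      rw [hmm] at hgauss
      omega
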